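/- arXiv:1903.02836 — 3 statements merged into one kernel-verified Lean document; each statement's English description precedes it below -/
import Mathlib

section
/- Let n be even, a, k ∈ ℝ^n with a ≠ 0, let ℓ denote the smallest integer such that a_{ℓ+1} ≠ 0 (so a_1 = ⋯ = a_ℓ = 0), and let λ = ⌊ℓ/2⌋. Then the n/2 functions J_1, J_2, ..., J_λ, F_{λ+1}, F_{λ+2}, ..., F_{n/2−1}, H are pairwise in involution with respect to the log-canonical Poisson bracket on (0,∞)^n if and only if k_{2i} = −k_{2i−1} for i = 1,...,λ and S_{jm} = 0 for all m = λ+1,...,n/2−1 and j = ℓ+1,...,2m. -/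
/-- Partial derivative `∂f/∂x_i` of a function on `ℝⁿ`. -/
noncomputable def pd {n : ℕ} (f : (Fin n → ℝ) → ℝ) (x : Fin n → ℝ) (i : Fin n) : ℝ :=
  fderiv ℝ f x (Pi.single i 1)

/-- The log-canonical Poisson bracket
`{f,g}(x) = Σ_{i<j} x_i x_j (∂f/∂x_i ∂g/∂x_j − ∂f/∂x_j ∂g/∂x_i)`. -/
noncomputable def pb {n : ℕ} (f g : (Fin n → ℝ) → ℝ) (x : Fin n → ℝ) : ℝ :=
  ∑ i : Fin n, ∑ j : Fin n,
    if i < j then x i * x j * (pd f x i * pd g x j - pd f x j * pd g x i) else 0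

/-- `J_m(x) = (x_1 x_3 ⋯ x_{2m−1})/(x_2 x_4 ⋯ x_{2m})` (1-based; here indices are 0-based,
so the numerator ranges over even indices `< 2m` and the denominator over odd indices `< 2m`). -/
noncomputable def Jfun {n : ℕ} (m : ℕ) (x : Fin n → ℝ) : ℝ :=
  (∏ i ∈ Finset.univ.filter (fun i : Fin n => i.val < 2*m ∧ Even i.val), x i) /
  (∏ i ∈ Finset.univ.filter (fun i : Fin n => i.val < 2*m ∧ Odd i.val), x i)

/-- `I_m(x) = (x_{2m+2} x_{2m+4} ⋯ x_n)/(x_{2m+1} x_{2m+3} ⋯ x_{n−1})` (1-based; here 0-based: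
numerator over odd indices `≥ 2m`, denominator over even indices `≥ 2m`). -/
noncomputable def Ifun {n : ℕ} (m : ℕ) (x : Fin n → ℝ) : ℝ :=
  (∏ i ∈ Finset.univ.filter (fun i : Fin n => 2*m ≤ i.val ∧ Odd i.val), x i) /
  (∏ i ∈ Finset.univ.filter (fun i : Fin n => 2*m ≤ i.val ∧ Even i.val), x i)

/-- `v_m(x) = a_1 x_1 + ⋯ + a_m x_m` (sum of the first `m` coordinates, 0-based indices `< m`). -/
def vfun {n : ℕ} (a : Fin n → ℝ) (m : ℕ) (x : Fin n → ℝ) : ℝ :=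
  ∑ j ∈ Finset.univ.filter (fun j : Fin n => j.val < m), a j * x j

/-- `F_m = v_{2m} I_m`. -/
noncomputable def Ffun {n : ℕ} (a : Fin n → ℝ) (m : ℕ) (x : Fin n → ℝ) : ℝ :=
  vfun a (2*m) x * Ifun m x

/-- The Hamiltonian `H(x) = Σ_i (a_i x_i + k_i log x_i)`. -/
noncomputable def Hfun {n : ℕ} (a k : Fin n → ℝ) (x : Fin n → ℝ) : ℝ :=
  ∑ i, (a i * x i + k i * Real.log (x i))

/-- `S_{jm} = a_j (−Σ_{i<j} k_i + Σ_{j<i≤2m} k_i)` (here `j : Fin n` is the 0-based index of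
the 1-based index `j+1`). -/
def Sfun {n : ℕ} (a k : Fin n → ℝ) (j : Fin n) (m : ℕ) : ℝ :=
  a j * (-(∑ i ∈ Finset.univ.filter (fun i : Fin n => i.val < j.val), k i)
    + ∑ i ∈ Finset.univ.filter (fun i : Fin n => j.val < i.val ∧ i.val < 2*m), k i)

noncomputable def eJn (p t : ℕ) : ℝ := if t < 2*p then (if Even t then 1 else -1) else 0
noncomputable def eIn (m t : ℕ) : ℝ := if 2*m ≤ t then (if Even t then -1 else 1) else 0

/-- prefix sums -/
def cN (A : ℕ → ℝ) (j : ℕ) : ℝ := ∑ i ∈ Finset.range j, A i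

/-- the double sum `∑_{i<j<n} (A_i B_j - A_j B_i)` in single-sum form -/
def DSN (A B : ℕ → ℝ) (n : ℕ) : ℝ :=
  ∑ j ∈ Finset.range n, (B j * cN A j - A j * cN B j)

lemma cN_congr {A A' : ℕ → ℝ} {j : ℕ} (h : ∀ t, t < j → A t = A' t) : cN A j = cN A' j :=
  Finset.sum_congr rfl (fun t ht => h t (Finset.mem_range.mp ht))

lemma DSN_congr {A A' B B' : ℕ → ℝ} {n : ℕ} (hA : ∀ t, t < n → A t = A' t)
    (hB : ∀ t, t < n → B t = B' t) : DSN A B n = DSN A' B' n := by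
  apply Finset.sum_congr rfl
  intro j hj
  rw [Finset.mem_range] at hj
  rw [hA j hj, hB j hj, cN_congr (fun t ht => hA t (lt_trans ht hj)),
    cN_congr (fun t ht => hB t (lt_trans ht hj))]

lemma DSN_self (A : ℕ → ℝ) (n : ℕ) : DSN A A n = 0 :=
  Finset.sum_eq_zero fun j _ => sub_self _

lemma cN_add (A B : ℕ → ℝ) (j : ℕ) : cN (fun t => A t + B t) j = cN A j + cN B j :=
  Finset.sum_add_distrib

lemma cN_smul (r : ℝ) (A : ℕ → ℝ) (j : ℕ) : cN (fun t => r * A t) j = r * cN A j := by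
  rw [cN, cN, Finset.mul_sum]

lemma DSN_add_left (A A' B : ℕ → ℝ) (n : ℕ) :
    DSN (fun t => A t + A' t) B n = DSN A B n + DSN A' B n := by
  rw [DSN, DSN, DSN, ← Finset.sum_add_distrib]
  apply Finset.sum_congr rfl
  intro j _
  rw [cN_add]
  ring

lemma DSN_add_right (A B B' : ℕ → ℝ) (n : ℕ) :
    DSN A (fun t => B t + B' t) n = DSN A B n + DSN A B' n := by
  rw [DSN, DSN, DSN, ← Finset.sum_add_distrib]
  apply Finset.sum_congr rfl
  intro j _
  rw [cN_add]
  ring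

lemma DSN_smul_left (r : ℝ) (A B : ℕ → ℝ) (n : ℕ) :
    DSN (fun t => r * A t) B n = r * DSN A B n := by
  rw [DSN, DSN, Finset.mul_sum]
  apply Finset.sum_congr rfl
  intro j _
  rw [cN_smul]
  ring

lemma cN_eJn (p j : ℕ) : cN (eJn p) j = if Odd j ∧ j < 2*p then 1 else 0 := by
  induction j with
  | zero => simp [cN]
  | succ j ih =>
    rw [cN, Finset.sum_range_succ, ← cN, ih, eJn]
    rcases Nat.even_or_odd j with h | h
    · have h1 : ¬ Odd j := by simpa [Nat.not_odd_iff_even]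
      have h2 : Odd (j+1) := Even.add_one h
      have hm2 : j % 2 = 0 := Nat.even_iff.mp h
      by_cases h3 : j < 2*p
      · have h4 : j + 1 < 2*p := by omega
        simp [h1, h2, h, h3, h4]
      · have h4 : ¬ (j + 1 < 2*p) := by omega
        simp [h1, h2, h, h3, h4]
    · have h1 : ¬ Even j := by simpa [Nat.not_even_iff_odd]
      have h2 : ¬ Odd (j+1) := by simp [Nat.not_odd_iff_even, Odd.add_one h]
      by_cases h3 : j < 2*p
      · have h5 : j < 2 * p := h3
        simp [h1, h2, h, h3]
      · simp [h1, h2, h, h3]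

lemma cN_eIn (m j : ℕ) : cN (eIn m) j = if Odd j ∧ 2*m ≤ j then -1 else 0 := by
  induction j with
  | zero => simp [cN]
  | succ j ih =>
    rw [cN, Finset.sum_range_succ, ← cN, ih, eIn]
    rcases Nat.even_or_odd j with h | h
    · have h1 : ¬ Odd j := by simpa [Nat.not_odd_iff_even]
      have h2 : Odd (j+1) := Even.add_one h
      have hm2 : j % 2 = 0 := Nat.even_iff.mp h
      by_cases h3 : 2*m ≤ j
      · have h4 : 2*m ≤ j + 1 := by omega
        simp [h1, h2, h, h3, h4]
      · have h4 : ¬ (2*m ≤ j + 1) := by omega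
        simp [h1, h2, h, h3, h4]
    · have h1 : ¬ Even j := by simpa [Nat.not_even_iff_odd]
      have h2 : ¬ Odd (j+1) := by simp [Nat.not_odd_iff_even, Odd.add_one h]
      by_cases h3 : 2*m ≤ j
      · simp [h1, h2, h, h3]
      · have h4 : ¬ (2*m ≤ j) := h3
        simp [h1, h2, h, h3]

lemma sum_range_two_mul (g : ℕ → ℝ) (N : ℕ) :
    ∑ j ∈ Finset.range (2*N), g j = ∑ t ∈ Finset.range N, (g (2*t) + g (2*t+1)) := by
  induction N with
  | zero => simp
  | succ N ih =>
    have h : 2*(N+1) = (2*N + 1) + 1 := by ring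
    rw [h, Finset.sum_range_succ, Finset.sum_range_succ, ih, Finset.sum_range_succ]
    ring

lemma sum_if_range {A : ℕ → ℝ} {j n : ℕ} (h : j ≤ n) :
    ∑ t ∈ Finset.range n, (if t < j then A t else 0) = cN A j := by
  rw [← Finset.sum_filter]
  have : Finset.filter (fun t => t < j) (Finset.range n) = Finset.range j := by
    ext t
    simp only [Finset.mem_filter, Finset.mem_range]
    omega
  rw [this, cN]

lemma telescope_pair (u : ℕ → ℝ) {m m' : ℕ} (h : m ≤ m') :
    ∑ t ∈ Finset.Ico m m', (u (2*t) + u (2*t+1)) = cN u (2*m') - cN u (2*m) := by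
  induction m' , h using Nat.le_induction with
  | base => simp
  | succ m' hm ih =>
    rw [Finset.sum_Ico_succ_top hm, ih]
    have h1 : cN u (2*(m'+1)) = cN u (2*m') + (u (2*m') + u (2*m'+1)) := by
      rw [show 2*(m'+1) = (2*m'+1)+1 from by ring, cN, Finset.sum_range_succ,
        Finset.sum_range_succ, ← cN]
      ring
    rw [h1]
    ring

/-- truncation of a sequence to indices `< 2m` -/
def maskN (u : ℕ → ℝ) (m t : ℕ) : ℝ := if t < 2*m then u t else 0

lemma cN_mask (u : ℕ → ℝ) (m j : ℕ) : cN (maskN u m) j = cN u (min j (2*m)) := by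
  by_cases h : j ≤ 2*m
  · rw [min_eq_left h]
    apply Finset.sum_congr rfl
    intro t ht
    rw [Finset.mem_range] at ht
    rw [maskN, if_pos (by omega)]
  · rw [min_eq_right (by omega)]
    rw [cN]
    have := sum_if_range (A := u) (j := 2*m) (n := j) (by omega)
    rw [← this]
    rfl

lemma DSN_eJ_eJ {p q N : ℕ} (hpq : p ≤ q) : DSN (eJn p) (eJn q) (2*N) = 0 := by
  apply Finset.sum_eq_zero
  intro j _
  rw [cN_eJn, cN_eJn]
  rcases Nat.even_or_odd j with h | h
  · have h1 : ¬ Odd j := by simpa [Nat.not_odd_iff_even]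
    simp [h1]
  · have h1 : ¬ Even j := by simpa [Nat.not_even_iff_odd]
    by_cases h3 : j < 2*p
    · have h4 : j < 2*q := by omega
      simp [eJn, h, h1, h3, h4]
    · simp [eJn, h, h1, h3]

lemma DSN_eJ_mask {p m N : ℕ} {u : ℕ → ℝ} (hu : ∀ t, t < 2*p → u t = 0) (hpm : p ≤ m) :
    DSN (eJn p) (maskN u m) (2*N) = 0 := by
  apply Finset.sum_eq_zero
  intro j _
  rw [cN_eJn, cN_mask]
  by_cases h3 : j < 2*p
  · have hminj : min j (2*m) = j := min_eq_left (by omega)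
    have hcu : cN u j = 0 := Finset.sum_eq_zero fun t ht =>
      hu t (lt_trans (Finset.mem_range.mp ht) h3)
    rw [hminj, hcu, maskN]
    by_cases h4 : j < 2*m
    · simp [h4, hu j h3]
    · simp [h4]
  · have : ¬ (Odd j ∧ j < 2*p) := by tauto
    rw [if_neg this, eJn, if_neg h3]
    ring

lemma DSN_eJ_eI {p m N : ℕ} (hpm : p ≤ m) : DSN (eJn p) (eIn m) (2*N) = 0 := by
  apply Finset.sum_eq_zero
  intro j _
  rw [cN_eJn, cN_eIn, eJn, eIn]
  by_cases h3 : j < 2*p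
  · have h4 : ¬ (2*m ≤ j) := by omega
    simp [h3, h4]
  · simp [h3]

lemma DSN_mask_mask {m m' N : ℕ} {u : ℕ → ℝ} (h : m ≤ m') (h2 : 2*m' ≤ 2*N) :
    DSN (maskN u m) (maskN u m') (2*N)
      = cN u (2*m) * (cN u (2*m') - cN u (2*m)) := by
  have step : DSN (maskN u m) (maskN u m') (2*N)
      = ∑ j ∈ Finset.range (2*N), (if 2*m ≤ j ∧ j < 2*m' then cN u (2*m) * u j else 0) := by
    apply Finset.sum_congr rfl
    intro j _
    rw [cN_mask, cN_mask, maskN, maskN]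
    by_cases hj1 : j < 2*m
    · have e1 : min j (2*m) = j := min_eq_left (by omega)
      have e2 : min j (2*m') = j := min_eq_left (by omega)
      have h4 : j < 2*m' := by omega
      rw [e1, e2, if_pos hj1, if_pos h4, if_neg (by omega)]
      ring
    · by_cases hj2 : j < 2*m'
      · have e1 : min j (2*m) = 2*m := min_eq_right (by omega)
        have e2 : min j (2*m') = j := min_eq_left (by omega)
        rw [e1, e2, if_neg hj1, if_pos hj2, if_pos (by omega)]
        ring
      · have e1 : min j (2*m) = 2*m := min_eq_right (by omega)
        rw [e1, if_neg hj1, if_neg hj2, if_neg (by omega)]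
        ring
  rw [step, ← Finset.sum_filter]
  have : Finset.filter (fun j => 2*m ≤ j ∧ j < 2*m') (Finset.range (2*N))
      = Finset.Ico (2*m) (2*m') := by
    ext t
    simp only [Finset.mem_filter, Finset.mem_range, Finset.mem_Ico]
    omega
  rw [this, ← Finset.mul_sum, Finset.sum_Ico_eq_sub u (by omega)]
  rfl

lemma sum_eIn (m N : ℕ) : ∑ j ∈ Finset.range (2*N), eIn m j = 0 := by
  rw [sum_range_two_mul]
  apply Finset.sum_eq_zero
  intro t _
  have he : Even (2*t) := even_two_mul t
  have ho : ¬ Even (2*t+1) := by simp [Nat.even_add_one, he]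
  by_cases h : m ≤ t
  · have h1 : 2*m ≤ 2*t := by omega
    have h2 : 2*m ≤ 2*t+1 := by omega
    simp only [eIn, h1, h2, if_pos, if_true, he, ho, if_false]
    ring
  · have h1 : ¬ (2*m ≤ 2*t) := by omega
    have h2 : ¬ (2*m ≤ 2*t+1) := by omega
    simp [eIn, h1, h2]

lemma DSN_mask_eI {m m' N : ℕ} {u : ℕ → ℝ} (h : m ≤ m') :
    DSN (maskN u m) (eIn m') (2*N) = 0 := by
  have step : DSN (maskN u m) (eIn m') (2*N)
      = ∑ j ∈ Finset.range (2*N), cN u (2*m) * eIn m' j := by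
    apply Finset.sum_congr rfl
    intro j _
    rw [cN_mask, cN_eIn]
    by_cases h3 : 2*m' ≤ j
    · have e1 : min j (2*m) = 2*m := min_eq_right (by omega)
      have e2 : maskN u m j = 0 := by rw [maskN, if_neg (by omega)]
      rw [e1, e2]
      ring
    · have e2 : eIn m' j = 0 := by rw [eIn, if_neg h3]
      have e3 : ¬ (Odd j ∧ 2*m' ≤ j) := by tauto
      rw [e2, if_neg e3]
      ring
  rw [step, ← Finset.mul_sum, sum_eIn]
  ring

lemma DSN_eI_mask {m m' N : ℕ} {u : ℕ → ℝ} (h : m ≤ m') (h2 : m' ≤ N) :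
    DSN (eIn m) (maskN u m') (2*N) = -(cN u (2*m') - cN u (2*m)) := by
  rw [DSN, sum_range_two_mul]
  have step : ∀ t ∈ Finset.range N,
      ((maskN u m' (2*t) * cN (eIn m) (2*t) - eIn m (2*t) * cN (maskN u m') (2*t))
       + (maskN u m' (2*t+1) * cN (eIn m) (2*t+1) - eIn m (2*t+1) * cN (maskN u m') (2*t+1)))
      = (if m ≤ t ∧ t < m' then -(u (2*t) + u (2*t+1)) else 0) := by
    intro t _
    have he : Even (2*t) := even_two_mul t
    have ho : ¬ Odd (2*t) := by simp [Nat.not_odd_iff_even, he]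
    have ho1 : Odd (2*t+1) := Even.add_one he
    have hno1 : ¬ Even (2*t+1) := by simp [Nat.even_add_one, he]
    have hc0 : cN (eIn m) (2*t) = 0 := by
      rw [cN_eIn, if_neg (by tauto)]
    rw [hc0, cN_eIn, cN_mask, cN_mask]
    by_cases h3 : m ≤ t
    · have g1 : eIn m (2*t) = -1 := by rw [eIn, if_pos (by omega), if_pos he]
      have g2 : eIn m (2*t+1) = 1 := by rw [eIn, if_pos (by omega), if_neg hno1]
      have g3 : (if Odd (2*t+1) ∧ 2*m ≤ 2*t+1 then (-1:ℝ) else 0) = -1 :=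
        if_pos ⟨ho1, by omega⟩
      rw [g1, g2, g3]
      by_cases h4 : t < m'
      · have e1 : min (2*t) (2*m') = 2*t := min_eq_left (by omega)
        have e2 : min (2*t+1) (2*m') = 2*t+1 := min_eq_left (by omega)
        have e3 : cN u (2*t+1) = cN u (2*t) + u (2*t) := Finset.sum_range_succ u (2*t)
        have e4 : maskN u m' (2*t+1) = u (2*t+1) := by rw [maskN, if_pos (by omega)]
        rw [e1, e2, e3, e4, if_pos (by omega : m ≤ t ∧ t < m')]
        ring
      · have e1 : min (2*t) (2*m') = 2*m' := min_eq_right (by omega)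
        have e2 : min (2*t+1) (2*m') = 2*m' := min_eq_right (by omega)
        have e4 : maskN u m' (2*t+1) = 0 := by rw [maskN, if_neg (by omega)]
        rw [e1, e2, e4, if_neg (by omega : ¬ (m ≤ t ∧ t < m'))]
        ring
    · have g1 : eIn m (2*t) = 0 := by rw [eIn, if_neg (by omega)]
      have g2 : eIn m (2*t+1) = 0 := by rw [eIn, if_neg (by omega)]
      have g3 : (if Odd (2*t+1) ∧ 2*m ≤ 2*t+1 then (-1:ℝ) else 0) = 0 :=
        if_neg (by rintro ⟨_, h5⟩; omega)
      rw [g1, g2, g3, if_neg (by omega : ¬ (m ≤ t ∧ t < m'))]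
      ring
  rw [Finset.sum_congr rfl step, ← Finset.sum_filter]
  have : Finset.filter (fun t => m ≤ t ∧ t < m') (Finset.range N) = Finset.Ico m m' := by
    ext t
    simp only [Finset.mem_filter, Finset.mem_range, Finset.mem_Ico]
    omega
  rw [this, ← telescope_pair u h]
  rw [Finset.sum_neg_distrib]

lemma DSN_eJ_u {p N : ℕ} {u : ℕ → ℝ} (hu : ∀ t, t < 2*p → u t = 0) :
    DSN (eJn p) u (2*N) = 0 := by
  apply Finset.sum_eq_zero
  intro j _
  rw [cN_eJn]
  by_cases h3 : j < 2*p
  · have hcu : cN u j = 0 := Finset.sum_eq_zero fun t ht =>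
      hu t (lt_trans (Finset.mem_range.mp ht) h3)
    rw [hcu, hu j h3]
    ring
  · rw [if_neg (by tauto : ¬ (Odd j ∧ j < 2*p)), eJn, if_neg h3]
    ring

lemma DSN_eJ_k {p N : ℕ} (k : ℕ → ℝ) (hp : p ≤ N) :
    DSN (eJn p) k (2*N) = ∑ t ∈ Finset.range p, (k (2*t) + k (2*t+1)) := by
  rw [DSN, sum_range_two_mul]
  have step : ∀ t ∈ Finset.range N,
      ((k (2*t) * cN (eJn p) (2*t) - eJn p (2*t) * cN k (2*t))
       + (k (2*t+1) * cN (eJn p) (2*t+1) - eJn p (2*t+1) * cN k (2*t+1)))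
      = (if t < p then k (2*t) + k (2*t+1) else 0) := by
    intro t _
    have he : Even (2*t) := even_two_mul t
    have ho : ¬ Odd (2*t) := by simp [Nat.not_odd_iff_even, he]
    have ho1 : Odd (2*t+1) := Even.add_one he
    have hno1 : ¬ Even (2*t+1) := by simp [Nat.even_add_one, he]
    have hc0 : cN (eJn p) (2*t) = 0 := by rw [cN_eJn, if_neg (by tauto)]
    rw [hc0, cN_eJn]
    by_cases h3 : t < p
    · have g1 : eJn p (2*t) = 1 := by rw [eJn, if_pos (by omega), if_pos he]
      have g2 : eJn p (2*t+1) = -1 := by rw [eJn, if_pos (by omega), if_neg hno1]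
      have g3 : (if Odd (2*t+1) ∧ 2*t+1 < 2*p then (1:ℝ) else 0) = 1 :=
        if_pos ⟨ho1, by omega⟩
      have e3 : cN k (2*t+1) = cN k (2*t) + k (2*t) := Finset.sum_range_succ k (2*t)
      rw [g1, g2, g3, e3, if_pos h3]
      ring
    · have g1 : eJn p (2*t) = 0 := by rw [eJn, if_neg (by omega)]
      have g2 : eJn p (2*t+1) = 0 := by rw [eJn, if_neg (by omega)]
      have g3 : (if Odd (2*t+1) ∧ 2*t+1 < 2*p then (1:ℝ) else 0) = 0 :=
        if_neg (by rintro ⟨_, h5⟩; omega)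
      rw [g1, g2, g3, if_neg h3]
      ring
  rw [Finset.sum_congr rfl step, sum_if_range hp]
  rfl

lemma DSN_mask_k {m N : ℕ} (u k : ℕ → ℝ) (h2m : m ≤ N) :
    DSN (maskN u m) k (2*N)
      = (∑ j ∈ Finset.range (2*m), (k j * cN u j - u j * cN k j))
        + cN u (2*m) * (cN k (2*N) - cN k (2*m)) := by
  rw [DSN]
  have hsplit : ∑ j ∈ Finset.range (2*N), (k j * cN (maskN u m) j - maskN u m j * cN k j)
      = (∑ j ∈ Finset.Ico 0 (2*m), (k j * cN (maskN u m) j - maskN u m j * cN k j))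
        + ∑ j ∈ Finset.Ico (2*m) (2*N), (k j * cN (maskN u m) j - maskN u m j * cN k j) := by
    rw [Finset.sum_Ico_consecutive _ (Nat.zero_le (2*m)) (by omega), ← Finset.range_eq_Ico]
  rw [hsplit, ← Finset.range_eq_Ico]
  congr 1
  · apply Finset.sum_congr rfl
    intro j hj
    rw [Finset.mem_range] at hj
    rw [cN_mask, min_eq_left (by omega), maskN, if_pos hj]
  · have step : ∀ j ∈ Finset.Ico (2*m) (2*N),
        (k j * cN (maskN u m) j - maskN u m j * cN k j) = cN u (2*m) * k j := by
      intro j hj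
      rw [Finset.mem_Ico] at hj
      rw [cN_mask, min_eq_right (by omega), maskN, if_neg (by omega)]
      ring
    rw [Finset.sum_congr rfl step, ← Finset.mul_sum, Finset.sum_Ico_eq_sub k (by omega)]
    rfl

/-- Abel-type summation swap. -/
lemma sum_mul_prefix (f g : ℕ → ℝ) (M : ℕ) :
    ∑ j ∈ Finset.range M, f j * cN g j
      = ∑ i ∈ Finset.range M, g i * (cN f M - cN f (i+1)) := by
  have key : ∀ M, ∑ j ∈ Finset.range M, f j * cN g j
      = ∑ i ∈ Finset.range M, g i * (∑ j ∈ Finset.Ico (i+1) M, f j) := by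
    intro M
    induction M with
    | zero => simp
    | succ M ih =>
      rw [Finset.sum_range_succ, ih, Finset.sum_range_succ]
      have : ∀ i ∈ Finset.range M, g i * (∑ j ∈ Finset.Ico (i+1) (M+1), f j)
          = g i * (∑ j ∈ Finset.Ico (i+1) M, f j) + g i * f M := by
        intro i hi
        rw [Finset.mem_range] at hi
        rw [Finset.sum_Ico_succ_top (by omega)]
        ring
      rw [Finset.sum_congr rfl this, Finset.sum_add_distrib]
      have : ∑ i ∈ Finset.range M, g i * f M = (cN g M) * f M := by
        rw [cN, Finset.sum_mul]
      rw [this]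
      simp
      ring
  rw [key M]
  apply Finset.sum_congr rfl
  intro i hi
  rw [Finset.mem_range] at hi
  rw [Finset.sum_Ico_eq_sub f (by omega)]
  rfl

lemma DSN_smul_right (r : ℝ) (A B : ℕ → ℝ) (n : ℕ) :
    DSN A (fun t => r * B t) n = r * DSN A B n := by
  rw [DSN, DSN, Finset.mul_sum]
  apply Finset.sum_congr rfl
  intro j _
  rw [cN_smul]
  ring

lemma DSN_eI_eI {m m' N : ℕ} (h : m ≤ m') : DSN (eIn m) (eIn m') (2*N) = 0 := by
  apply Finset.sum_eq_zero
  intro j _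
  rw [cN_eIn, cN_eIn]
  rcases Nat.even_or_odd j with hpar | hpar
  · have h1 : ¬ Odd j := by simp [Nat.not_odd_iff_even, hpar]
    simp [h1]
  · have h1 : ¬ Even j := by simp [Nat.not_even_iff_odd, hpar]
    by_cases h3 : 2*m' ≤ j
    · have h4 : 2*m ≤ j := by omega
      simp [eIn, hpar, h1, h3, h4]
    · have g1 : eIn m' j = 0 := by rw [eIn, if_neg h3]
      rw [g1, if_neg (by tauto : ¬ (Odd j ∧ 2*m' ≤ j))]
      ring

lemma DSN_J_J {p q N : ℕ} (h : p ≤ q) : DSN (eJn p) (eJn q) (2*N) = 0 := DSN_eJ_eJ h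

lemma DSN_J_F {p m N : ℕ} (u : ℕ → ℝ) (hu : ∀ t, t < 2*p → u t = 0) (hpm : p ≤ m) :
    DSN (eJn p) (fun t => maskN u m t + cN u (2*m) * eIn m t) (2*N) = 0 := by
  rw [DSN_add_right, DSN_smul_right, DSN_eJ_mask hu hpm, DSN_eJ_eI hpm]
  ring

lemma DSN_F_F {m m' N : ℕ} (u : ℕ → ℝ) (h : m ≤ m') (h2 : m' ≤ N) :
    DSN (fun t => maskN u m t + cN u (2*m) * eIn m t)
        (fun t => maskN u m' t + cN u (2*m') * eIn m' t) (2*N) = 0 := by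
  rw [DSN_add_left, DSN_add_right, DSN_add_right, DSN_smul_right, DSN_smul_right,
    DSN_smul_left, DSN_smul_left]
  rw [DSN_mask_mask h (by omega), DSN_mask_eI h, DSN_eI_mask h h2, DSN_eI_eI h]
  ring

lemma DSN_J_H {p N : ℕ} (u k : ℕ → ℝ) (hu : ∀ t, t < 2*p → u t = 0) (hp : p ≤ N) :
    DSN (eJn p) (fun t => u t + k t) (2*N)
      = ∑ t ∈ Finset.range p, (k (2*t) + k (2*t+1)) := by
  rw [DSN_add_right, DSN_eJ_u hu, DSN_eJ_k k hp]
  ring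

lemma DSN_F_H {m N : ℕ} (u k : ℕ → ℝ) (h : m ≤ N) :
    DSN (fun t => maskN u m t + cN u (2*m) * eIn m t) (fun t => u t + k t) (2*N)
      = ∑ j ∈ Finset.range (2*m), (k j * cN u j - u j * cN k j) := by
  have humask : ∀ t, t < 2*N → u t = maskN u N t := by
    intro t ht
    rw [maskN, if_pos ht]
  rw [DSN_add_left, DSN_add_right, DSN_add_right, DSN_smul_left, DSN_smul_left]
  have e1 : DSN (maskN u m) u (2*N) = cN u (2*m) * (cN u (2*N) - cN u (2*m)) := by
    rw [DSN_congr (fun t _ => rfl) humask, DSN_mask_mask h (le_refl _)]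
  have e2 : DSN (eIn m) u (2*N) = -(cN u (2*N) - cN u (2*m)) := by
    rw [DSN_congr (fun t _ => rfl) humask, DSN_eI_mask h (le_refl _)]
  have hkmask : ∀ t, t < 2*N → k t = maskN k N t := by
    intro t ht
    rw [maskN, if_pos ht]
  have e3 : DSN (eIn m) k (2*N) = -(cN k (2*N) - cN k (2*m)) := by
    rw [DSN_congr (fun t _ => rfl) hkmask, DSN_eI_mask h (le_refl _)]
  rw [e1, e2, e3, DSN_mask_k u k h]
  ring

lemma T_swap {m : ℕ} (u k : ℕ → ℝ) :
    ∑ j ∈ Finset.range (2*m), (k j * cN u j - u j * cN k j)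
      = ∑ j ∈ Finset.range (2*m), u j * (cN k (2*m) - cN k (j+1) - cN k j) := by
  rw [Finset.sum_sub_distrib, sum_mul_prefix k u (2*m), ← Finset.sum_sub_distrib]
  apply Finset.sum_congr rfl
  intro j _
  ring


open Finset

variable {n : ℕ}

lemma hasFDerivAt_prodf (s : Finset (Fin n)) (x : Fin n → ℝ) :
    HasFDerivAt (fun y : Fin n → ℝ => ∏ i ∈ s, y i)
      (∑ i ∈ s, (∏ j ∈ s.erase i, x j) • (ContinuousLinearMap.proj i : (Fin n → ℝ) →L[ℝ] ℝ)) x := by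
  classical
  induction s using Finset.induction_on with
  | empty => simpa using hasFDerivAt_const (1:ℝ) x
  | insert A s ha ih =>
    have h1 : HasFDerivAt (fun y : Fin n → ℝ => y A)
        (ContinuousLinearMap.proj A : (Fin n → ℝ) →L[ℝ] ℝ) x := hasFDerivAt_apply A x
    have h2 := h1.mul ih
    have : (fun y : Fin n → ℝ => ∏ i ∈ insert A s, y i)
        = fun y : Fin n → ℝ => y A * ∏ i ∈ s, y i := by
      funext y; exact Finset.prod_insert ha
    rw [this]
    refine h2.congr_fderiv (Eq.symm ?_)
    rw [Finset.sum_insert ha, Finset.erase_insert ha, Finset.smul_sum]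
    rw [add_comm]
    congr 1
    apply Finset.sum_congr rfl
    intro i hi
    have hia : i ≠ A := by rintro rfl; exact ha hi
    rw [Finset.erase_insert_of_ne hia.symm, Finset.prod_insert (by simp [ha, Finset.mem_erase])]
    rw [smul_smul]

lemma pd_prodf (s : Finset (Fin n)) (x : Fin n → ℝ) (i0 : Fin n) :
    pd (fun y : Fin n → ℝ => ∏ i ∈ s, y i) x i0
      = if i0 ∈ s then ∏ j ∈ s.erase i0, x j else 0 := by
  classical
  rw [pd, (hasFDerivAt_prodf s x).fderiv]
  rw [ContinuousLinearMap.sum_apply]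
  have : ∀ i ∈ s, ((∏ j ∈ s.erase i, x j) • (ContinuousLinearMap.proj i :
      (Fin n → ℝ) →L[ℝ] ℝ)) (Pi.single i0 1)
      = if i = i0 then (∏ j ∈ s.erase i0, x j) else 0 := by
    intro i hi
    rw [ContinuousLinearMap.smul_apply, ContinuousLinearMap.proj_apply, Pi.single_apply]
    by_cases h : i = i0 <;> simp [h]
  rw [Finset.sum_congr rfl this, Finset.sum_ite_eq' s i0 (fun _ => ∏ j ∈ s.erase i0, x j)]


lemma xi_pd_prodf (s : Finset (Fin n)) (x : Fin n → ℝ) (i0 : Fin n) :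
    x i0 * pd (fun y : Fin n → ℝ => ∏ i ∈ s, y i) x i0
      = if i0 ∈ s then ∏ j ∈ s, x j else 0 := by
  rw [pd_prodf]
  by_cases h : i0 ∈ s
  · simp only [h, if_true]; rw [Finset.mul_prod_erase s x h]
  · simp [h]

lemma hasFDerivAt_ratio (s1 s2 : Finset (Fin n)) (x : Fin n → ℝ)
    (hQ : (∏ i ∈ s2, x i) ≠ 0) :
    HasFDerivAt (fun y : Fin n → ℝ => (∏ i ∈ s1, y i) / (∏ i ∈ s2, y i))
      ((∏ i ∈ s1, x i) • ((-((∏ i ∈ s2, x i) ^ 2)⁻¹) •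
          (∑ i ∈ s2, (∏ j ∈ s2.erase i, x j) • (ContinuousLinearMap.proj i : (Fin n → ℝ) →L[ℝ] ℝ)))
        + (∏ i ∈ s2, x i)⁻¹ •
          (∑ i ∈ s1, (∏ j ∈ s1.erase i, x j) • (ContinuousLinearMap.proj i : (Fin n → ℝ) →L[ℝ] ℝ))) x := by
  have hP := hasFDerivAt_prodf s1 x
  have hQ' := hasFDerivAt_prodf s2 x
  have hinv : HasFDerivAt (fun y : Fin n → ℝ => (∏ i ∈ s2, y i)⁻¹)
      ((-((∏ i ∈ s2, x i) ^ 2)⁻¹) •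
        (∑ i ∈ s2, (∏ j ∈ s2.erase i, x j) • (ContinuousLinearMap.proj i : (Fin n → ℝ) →L[ℝ] ℝ))) x :=
    (hasDerivAt_inv hQ).comp_hasFDerivAt x hQ'
  have hmul := hP.mul hinv
  have : (fun y : Fin n → ℝ => (∏ i ∈ s1, y i) / (∏ i ∈ s2, y i))
      = fun y : Fin n → ℝ => (∏ i ∈ s1, y i) * (∏ i ∈ s2, y i)⁻¹ := by
    funext y; rw [div_eq_mul_inv]
  rw [this]
  exact hmul

lemma grad_ratio (s1 s2 : Finset (Fin n)) (h12 : Disjoint s1 s2) (x : Fin n → ℝ)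
    (hx : ∀ i, 0 < x i) (i0 : Fin n) :
    x i0 * pd (fun y : Fin n → ℝ => (∏ i ∈ s1, y i) / (∏ i ∈ s2, y i)) x i0
      = ((∏ i ∈ s1, x i) / (∏ i ∈ s2, x i))
        * ((if i0 ∈ s1 then 1 else 0) - (if i0 ∈ s2 then 1 else 0)) := by
  have hQpos : 0 < ∏ i ∈ s2, x i := Finset.prod_pos (fun i _ => hx i)
  have hQ : (∏ i ∈ s2, x i) ≠ 0 := ne_of_gt hQpos
  rw [pd, (hasFDerivAt_ratio s1 s2 x hQ).fderiv]
  simp only [ContinuousLinearMap.add_apply, ContinuousLinearMap.smul_apply,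
    ContinuousLinearMap.sum_apply, ContinuousLinearMap.proj_apply, Pi.single_apply,
    smul_eq_mul]
  have e1 : (∑ i ∈ s1, (∏ j ∈ s1.erase i, x j) * (if i = i0 then (1:ℝ) else 0))
      = if i0 ∈ s1 then ∏ j ∈ s1.erase i0, x j else 0 := by
    rw [← Finset.sum_ite_eq' s1 i0 (fun i => ∏ j ∈ s1.erase i0, x j)]
    apply Finset.sum_congr rfl; intro i hi
    by_cases h : i = i0
    · subst h; simp
    · simp [h]
  have e2 : (∑ i ∈ s2, (∏ j ∈ s2.erase i, x j) * (if i = i0 then (1:ℝ) else 0))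
      = if i0 ∈ s2 then ∏ j ∈ s2.erase i0, x j else 0 := by
    rw [← Finset.sum_ite_eq' s2 i0 (fun i => ∏ j ∈ s2.erase i0, x j)]
    apply Finset.sum_congr rfl; intro i hi
    by_cases h : i = i0
    · subst h; simp
    · simp [h]
  rw [e1, e2]
  by_cases h1 : i0 ∈ s1
  · have h2 : i0 ∉ s2 := fun h2 => (Finset.disjoint_left.mp h12 h1) h2
    have key : x i0 * ∏ j ∈ s1.erase i0, x j = ∏ j ∈ s1, x j := Finset.mul_prod_erase s1 x h1
    simp only [h1, h2, if_true, if_false]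
    rw [div_eq_mul_inv, ← key]
    ring
  · by_cases h2 : i0 ∈ s2
    · have key : x i0 * ∏ j ∈ s2.erase i0, x j = ∏ j ∈ s2, x j := Finset.mul_prod_erase s2 x h2
      simp only [h1, h2, if_true, if_false]
      field_simp
      rw [← key]
      ring
    · simp [h1, h2]

lemma Jfun_pos {n : ℕ} (m : ℕ) (x : Fin n → ℝ) (hx : ∀ i, 0 < x i) : 0 < Jfun m x :=
  div_pos (Finset.prod_pos fun i _ => hx i) (Finset.prod_pos fun i _ => hx i)

lemma Ifun_pos {n : ℕ} (m : ℕ) (x : Fin n → ℝ) (hx : ∀ i, 0 < x i) : 0 < Ifun m x :=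
  div_pos (Finset.prod_pos fun i _ => hx i) (Finset.prod_pos fun i _ => hx i)

lemma grad_J {n : ℕ} (m : ℕ) (x : Fin n → ℝ) (hx : ∀ i, 0 < x i) (i0 : Fin n) :
    x i0 * pd (Jfun m) x i0 = Jfun m x * eJn m i0.val := by
  have hd : Disjoint (Finset.univ.filter (fun i : Fin n => i.val < 2*m ∧ Even i.val))
      (Finset.univ.filter (fun i : Fin n => i.val < 2*m ∧ Odd i.val)) := by
    rw [Finset.disjoint_left]
    intro i hi1 hi2
    simp only [Finset.mem_filter, Finset.mem_univ, true_and] at hi1 hi2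
    exact (Nat.not_odd_iff_even.mpr hi1.2) hi2.2
  have := grad_ratio _ _ hd x hx i0
  rw [show pd (Jfun (n:=n) m) x i0 = pd (fun y : Fin n → ℝ =>
      (∏ i ∈ Finset.univ.filter (fun i : Fin n => i.val < 2*m ∧ Even i.val), y i) /
      (∏ i ∈ Finset.univ.filter (fun i : Fin n => i.val < 2*m ∧ Odd i.val), y i)) x i0 from rfl]
  rw [this]
  have : Jfun m x = ((∏ i ∈ Finset.univ.filter (fun i : Fin n => i.val < 2*m ∧ Even i.val), x i) /
      (∏ i ∈ Finset.univ.filter (fun i : Fin n => i.val < 2*m ∧ Odd i.val), x i)) := rfl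
  rw [← this]
  congr 1
  simp only [Finset.mem_filter, Finset.mem_univ, true_and, eJn]
  rcases Nat.even_or_odd i0.val with he | ho
  · simp [he, Nat.not_odd_iff_even.mpr he]
  · simp [ho, Nat.not_even_iff_odd.mpr ho]
    split_ifs <;> ring
  
lemma grad_I {n : ℕ} (m : ℕ) (x : Fin n → ℝ) (hx : ∀ i, 0 < x i) (i0 : Fin n) :
    x i0 * pd (Ifun m) x i0 = Ifun m x * eIn m i0.val := by
  have hd : Disjoint (Finset.univ.filter (fun i : Fin n => 2*m ≤ i.val ∧ Odd i.val))
      (Finset.univ.filter (fun i : Fin n => 2*m ≤ i.val ∧ Even i.val)) := by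
    rw [Finset.disjoint_left]
    intro i hi1 hi2
    simp only [Finset.mem_filter, Finset.mem_univ, true_and] at hi1 hi2
    exact (Nat.not_odd_iff_even.mpr hi2.2) hi1.2
  have := grad_ratio _ _ hd x hx i0
  rw [show pd (Ifun (n:=n) m) x i0 = pd (fun y : Fin n → ℝ =>
      (∏ i ∈ Finset.univ.filter (fun i : Fin n => 2*m ≤ i.val ∧ Odd i.val), y i) /
      (∏ i ∈ Finset.univ.filter (fun i : Fin n => 2*m ≤ i.val ∧ Even i.val), y i)) x i0 from rfl]
  rw [this]
  have : Ifun m x = ((∏ i ∈ Finset.univ.filter (fun i : Fin n => 2*m ≤ i.val ∧ Odd i.val), x i) /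
      (∏ i ∈ Finset.univ.filter (fun i : Fin n => 2*m ≤ i.val ∧ Even i.val), x i)) := rfl
  rw [← this]
  congr 1
  simp only [Finset.mem_filter, Finset.mem_univ, true_and, eIn]
  rcases Nat.even_or_odd i0.val with he | ho
  · simp [he, Nat.not_odd_iff_even.mpr he]
    split_ifs <;> ring
  · simp [ho, Nat.not_even_iff_odd.mpr ho]

lemma hasFDerivAt_vfun {n : ℕ} (a : Fin n → ℝ) (m : ℕ) (x : Fin n → ℝ) :
    HasFDerivAt (vfun a m)
      (∑ j ∈ Finset.univ.filter (fun j : Fin n => j.val < m),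
        a j • (ContinuousLinearMap.proj j : (Fin n → ℝ) →L[ℝ] ℝ)) x := by
  have : ∀ j ∈ Finset.univ.filter (fun j : Fin n => j.val < m),
      HasFDerivAt (fun y : Fin n → ℝ => a j * y j)
        (a j • (ContinuousLinearMap.proj j : (Fin n → ℝ) →L[ℝ] ℝ)) x :=
    fun j _ => (hasFDerivAt_apply j x).const_mul (a j)
  exact HasFDerivAt.fun_sum this

lemma grad_v {n : ℕ} (a : Fin n → ℝ) (m : ℕ) (x : Fin n → ℝ) (i0 : Fin n) :
    x i0 * pd (vfun a m) x i0 = if i0.val < m then a i0 * x i0 else 0 := by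
  rw [pd, (hasFDerivAt_vfun a m x).fderiv]
  rw [ContinuousLinearMap.sum_apply]
  simp only [ContinuousLinearMap.smul_apply, ContinuousLinearMap.proj_apply, Pi.single_apply,
    smul_eq_mul]
  have : (∑ j ∈ Finset.univ.filter (fun j : Fin n => j.val < m),
      a j * (if j = i0 then (1:ℝ) else 0))
      = if i0 ∈ Finset.univ.filter (fun j : Fin n => j.val < m) then a i0 else 0 := by
    rw [← Finset.sum_ite_eq' _ i0 (fun j => a i0)]
    apply Finset.sum_congr rfl; intro j hj
    by_cases h : j = i0
    · subst h; simp
    · simp [h]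
  rw [this]
  simp only [Finset.mem_filter, Finset.mem_univ, true_and]
  split_ifs <;> ring

lemma grad_H {n : ℕ} (a k : Fin n → ℝ) (x : Fin n → ℝ) (hx : ∀ i, 0 < x i) (i0 : Fin n) :
    x i0 * pd (Hfun a k) x i0 = a i0 * x i0 + k i0 := by
  have hterm : ∀ i : Fin n, HasFDerivAt (fun y : Fin n → ℝ => a i * y i + k i * Real.log (y i))
      ((a i + k i * (x i)⁻¹) • (ContinuousLinearMap.proj i : (Fin n → ℝ) →L[ℝ] ℝ)) x := by
    intro i
    have h1 : HasFDerivAt (fun y : Fin n → ℝ => a i * y i)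
        (a i • (ContinuousLinearMap.proj i : (Fin n → ℝ) →L[ℝ] ℝ)) x :=
      (hasFDerivAt_apply i x).const_mul (a i)
    have hlog : HasFDerivAt (fun y : Fin n → ℝ => Real.log (y i))
        ((x i)⁻¹ • (ContinuousLinearMap.proj i : (Fin n → ℝ) →L[ℝ] ℝ)) x :=
      (Real.hasDerivAt_log (ne_of_gt (hx i))).comp_hasFDerivAt (f := fun y : Fin n → ℝ => y i) x (hasFDerivAt_apply i x)
    have h2 := h1.add (hlog.const_mul (k i))
    refine h2.congr_fderiv (Eq.symm ?_)
    rw [add_smul]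
    congr 1
    rw [smul_smul]
  have hH : HasFDerivAt (Hfun a k)
      (∑ i : Fin n, (a i + k i * (x i)⁻¹) • (ContinuousLinearMap.proj i : (Fin n → ℝ) →L[ℝ] ℝ)) x :=
    HasFDerivAt.fun_sum (fun i _ => hterm i)
  rw [pd, hH.fderiv, ContinuousLinearMap.sum_apply]
  simp only [ContinuousLinearMap.smul_apply, ContinuousLinearMap.proj_apply, Pi.single_apply,
    smul_eq_mul]
  have : (∑ i : Fin n, (a i + k i * (x i)⁻¹) * (if i = i0 then (1:ℝ) else 0))
      = a i0 + k i0 * (x i0)⁻¹ := by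
    have h2 := Finset.sum_ite_eq' Finset.univ i0 (fun _ => a i0 + k i0 * (x i0)⁻¹)
    simp only [Finset.mem_univ, if_true] at h2
    rw [← h2]
    apply Finset.sum_congr rfl; intro i hi
    by_cases h : i = i0
    · subst h; simp
    · simp [h]
  rw [this, mul_add, mul_comm (x i0) (a i0)]
  congr 1
  rw [mul_comm (k i0), ← mul_assoc, mul_inv_cancel₀ (ne_of_gt (hx i0)), one_mul]


lemma pd_mul {n : ℕ} {c d : (Fin n → ℝ) → ℝ} {x : Fin n → ℝ}
    (hc : DifferentiableAt ℝ c x) (hd : DifferentiableAt ℝ d x) (i0 : Fin n) :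
    pd (fun y => c y * d y) x i0 = c x * pd d x i0 + d x * pd c x i0 := by
  rw [pd, fderiv_fun_mul hc hd]
  simp only [ContinuousLinearMap.add_apply, ContinuousLinearMap.smul_apply, smul_eq_mul]
  rfl

lemma diffAt_Ifun {n : ℕ} (m : ℕ) (x : Fin n → ℝ) (hx : ∀ i, 0 < x i) :
    DifferentiableAt ℝ (Ifun (n := n) m) x := by
  have hQ : (∏ i ∈ Finset.univ.filter (fun i : Fin n => 2*m ≤ i.val ∧ Even i.val), x i) ≠ 0 :=
    ne_of_gt (Finset.prod_pos fun i _ => hx i)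
  exact (hasFDerivAt_ratio _ _ x hQ).differentiableAt

lemma grad_F {n : ℕ} (a : Fin n → ℝ) (m : ℕ) (x : Fin n → ℝ) (hx : ∀ i, 0 < x i) (i0 : Fin n) :
    x i0 * pd (Ffun a m) x i0
      = Ifun m x * ((if i0.val < 2*m then a i0 * x i0 else 0)
          + vfun a (2*m) x * eIn m i0.val) := by
  have hv : DifferentiableAt ℝ (vfun a (2*m)) x := (hasFDerivAt_vfun a (2*m) x).differentiableAt
  have hI : DifferentiableAt ℝ (Ifun (n := n) m) x := diffAt_Ifun m x hx
  have h1 : pd (Ffun a m) x i0 = vfun a (2*m) x * pd (Ifun m) x i0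
      + Ifun m x * pd (vfun a (2*m)) x i0 := pd_mul hv hI i0
  rw [h1, mul_add]
  rw [show x i0 * (vfun a (2*m) x * pd (Ifun m) x i0)
      = vfun a (2*m) x * (x i0 * pd (Ifun m) x i0) from by ring]
  rw [show x i0 * (Ifun m x * pd (vfun a (2*m)) x i0)
      = Ifun m x * (x i0 * pd (vfun a (2*m)) x i0) from by ring]
  rw [grad_I m x hx i0, grad_v a (2*m) x i0]
  ring

section Bridge

/-- lift a `Fin n` vector to `ℕ` (zero beyond `n`). -/
noncomputable def liftF {n : ℕ} (f : Fin n → ℝ) (t : ℕ) : ℝ := if h : t < n then f ⟨t, h⟩ else 0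

lemma liftF_val {n : ℕ} (f : Fin n → ℝ) (i : Fin n) : liftF f i.val = f i := by
  rw [liftF, dif_pos i.isLt]

lemma pb_eq_DSN {n : ℕ} (f g : (Fin n → ℝ) → ℝ) (x : Fin n → ℝ) (A B : ℕ → ℝ)
    (hA : ∀ i : Fin n, x i * pd f x i = A i.val)
    (hB : ∀ i : Fin n, x i * pd g x i = B i.val) :
    pb f g x = DSN A B n := by
  have key : ∀ i j : Fin n,
      (if i < j then x i * x j * (pd f x i * pd g x j - pd f x j * pd g x i) else 0)
      = if i.val < j.val then (A i.val * B j.val - A j.val * B i.val) else 0 := by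
    intro i j
    simp only [Fin.lt_def]
    by_cases h : i.val < j.val
    · rw [if_pos h, if_pos h, ← hA i, ← hB j, ← hA j, ← hB i]
      ring
    · rw [if_neg h, if_neg h]
  rw [pb]
  simp only [key]
  rw [Finset.sum_comm]
  have inner : ∀ j : Fin n,
      (∑ i : Fin n, if i.val < j.val then (A i.val * B j.val - A j.val * B i.val) else 0)
      = B j.val * cN A j.val - A j.val * cN B j.val := by
    intro j
    have h1 : ∀ i : Fin n, (if i.val < j.val then (A i.val * B j.val - A j.val * B i.val) else 0)
        = B j.val * (if i.val < j.val then A i.val else 0)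
          - A j.val * (if i.val < j.val then B i.val else 0) := by
      intro i
      by_cases h : i.val < j.val
      · rw [if_pos h, if_pos h, if_pos h]; ring
      · rw [if_neg h, if_neg h, if_neg h]; ring
    simp only [h1]
    rw [Finset.sum_sub_distrib, ← Finset.mul_sum, ← Finset.mul_sum]
    rw [Fin.sum_univ_eq_sum_range (fun t => if t < j.val then A t else 0) n,
      Fin.sum_univ_eq_sum_range (fun t => if t < j.val then B t else 0) n,
      sum_if_range (le_of_lt j.isLt), sum_if_range (le_of_lt j.isLt)]
  simp only [inner]
  rw [Fin.sum_univ_eq_sum_range (fun t => B t * cN A t - A t * cN B t) n]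
  rfl

lemma vfun_eq_cN {n : ℕ} (a x : Fin n → ℝ) {m : ℕ} (hm : m ≤ n) :
    vfun a m x = cN (liftF (fun i => a i * x i)) m := by
  rw [vfun, Finset.sum_filter]
  have : ∀ j : Fin n, (if j.val < m then a j * x j else 0)
      = (fun t => if t < m then liftF (fun i => a i * x i) t else 0) j.val := by
    intro j
    simp only [liftF_val]
  simp only [this]
  rw [Fin.sum_univ_eq_sum_range (fun t => if t < m then liftF (fun i => a i * x i) t else 0) n,
    sum_if_range hm]

lemma sum_filter_lt_eq {n : ℕ} (k : Fin n → ℝ) {j : ℕ} (hj : j ≤ n) :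
    ∑ i ∈ Finset.univ.filter (fun i : Fin n => i.val < j), k i = cN (liftF k) j := by
  rw [Finset.sum_filter]
  have : ∀ i : Fin n, (if i.val < j then k i else 0)
      = (fun t => if t < j then liftF k t else 0) i.val := by
    intro i
    simp only [liftF_val]
  simp only [this]
  rw [Fin.sum_univ_eq_sum_range (fun t => if t < j then liftF k t else 0) n, sum_if_range hj]

lemma sum_filter_between_eq {n : ℕ} (k : Fin n → ℝ) {j M : ℕ} (hj : j < M) (hM : M ≤ n) :
    ∑ i ∈ Finset.univ.filter (fun i : Fin n => j < i.val ∧ i.val < M), k i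
      = cN (liftF k) M - cN (liftF k) (j+1) := by
  rw [Finset.sum_filter]
  have : ∀ i : Fin n, (if j < i.val ∧ i.val < M then k i else 0)
      = (fun t => if j < t ∧ t < M then liftF k t else 0) i.val := by
    intro i
    simp only [liftF_val]
  simp only [this]
  rw [Fin.sum_univ_eq_sum_range (fun t => if j < t ∧ t < M then liftF k t else 0) n]
  rw [← Finset.sum_filter]
  have e : Finset.filter (fun t => j < t ∧ t < M) (Finset.range n) = Finset.Ico (j+1) M := by
    ext t
    simp only [Finset.mem_filter, Finset.mem_range, Finset.mem_Ico]
    omega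
  rw [e, Finset.sum_Ico_eq_sub (liftF k) (by omega)]
  rfl

lemma Sfun_eq {n : ℕ} (a k : Fin n → ℝ) (j : Fin n) {m : ℕ} (hj : j.val < 2*m) (hm : 2*m ≤ n) :
    Sfun a k j m
      = liftF a j.val * (cN (liftF k) (2*m) - cN (liftF k) (j.val+1) - cN (liftF k) j.val) := by
  rw [Sfun, sum_filter_lt_eq k (le_of_lt j.isLt), sum_filter_between_eq k hj hm, liftF_val]
  ring

end Bridge

section ComputedBrackets

lemma liftF_mul {n : ℕ} (a x : Fin n → ℝ) (t : ℕ) :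
    liftF (fun i => a i * x i) t = liftF a t * liftF x t := by
  rw [liftF, liftF, liftF]
  by_cases h : t < n
  · rw [dif_pos h, dif_pos h, dif_pos h]
  · rw [dif_neg h, dif_neg h, dif_neg h]
    ring

lemma pb_self {n : ℕ} (f : (Fin n → ℝ) → ℝ) (x : Fin n → ℝ) : pb f f x = 0 := by
  rw [pb]
  apply Finset.sum_eq_zero
  intro i _
  apply Finset.sum_eq_zero
  intro j _
  by_cases h : i < j
  · rw [if_pos h]; ring
  · rw [if_neg h]

lemma pb_antisymm {n : ℕ} (f g : (Fin n → ℝ) → ℝ) (x : Fin n → ℝ) :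
    pb f g x = - pb g f x := by
  rw [pb, pb, ← Finset.sum_neg_distrib]
  apply Finset.sum_congr rfl
  intro i _
  rw [← Finset.sum_neg_distrib]
  apply Finset.sum_congr rfl
  intro j _
  by_cases h : i < j
  · rw [if_pos h, if_pos h]; ring
  · rw [if_neg h, if_neg h]; ring

variable {N : ℕ}

lemma hu0_of_a0 {p : ℕ} (a x : Fin (2*N) → ℝ)
    (ha0 : ∀ i : Fin (2*N), i.val < 2*p → a i = 0) :
    ∀ t, t < 2*p → liftF (fun i => a i * x i) t = 0 := by
  intro t ht
  rw [liftF]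
  by_cases h : t < 2*N
  · rw [dif_pos h, ha0 ⟨t, h⟩ ht]
    ring
  · rw [dif_neg h]

lemma gradF_lift (a : Fin (2*N) → ℝ) (m : ℕ) (hm : 2*m ≤ 2*N) (x : Fin (2*N) → ℝ)
    (hx : ∀ i, 0 < x i) (i : Fin (2*N)) :
    x i * pd (Ffun a m) x i
      = (fun t => Ifun m x * (maskN (liftF (fun i => a i * x i)) m t
          + cN (liftF (fun i => a i * x i)) (2*m) * eIn m t)) i.val := by
  rw [grad_F a m x hx i]
  have h1 : maskN (liftF (fun i => a i * x i)) m i.val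
      = if i.val < 2*m then a i * x i else 0 := by
    rw [maskN, liftF_val (fun i => a i * x i) i]
  have h2 : vfun a (2*m) x = cN (liftF (fun i => a i * x i)) (2*m) := vfun_eq_cN a x hm
  rw [h2]
  show _ = Ifun m x * (maskN (liftF fun i => a i * x i) m i.val
      + cN (liftF fun i => a i * x i) (2*m) * eIn m i.val)
  rw [h1]

lemma gradH_lift (a k x : Fin (2*N) → ℝ) (hx : ∀ i, 0 < x i) (i : Fin (2*N)) :
    x i * pd (Hfun a k) x i
      = (fun t => liftF (fun i => a i * x i) t + liftF k t) i.val := by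
  rw [grad_H a k x hx i]
  simp only [liftF_val]

lemma pb_J_J (p q : ℕ) (hpq : p ≤ q) (x : Fin (2*N) → ℝ) (hx : ∀ i, 0 < x i) :
    pb (Jfun p) (Jfun q) x = 0 := by
  rw [pb_eq_DSN (Jfun p) (Jfun q) x (fun t => Jfun p x * eJn p t) (fun t => Jfun q x * eJn q t)
      (fun i => grad_J p x hx i) (fun i => grad_J q x hx i)]
  rw [DSN_smul_left, DSN_smul_right, DSN_eJ_eJ hpq]
  ring

lemma pb_J_F (a : Fin (2*N) → ℝ) (p m : ℕ) (hpm : p ≤ m) (hm : 2*m ≤ 2*N)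
    (ha0 : ∀ i : Fin (2*N), i.val < 2*p → a i = 0)
    (x : Fin (2*N) → ℝ) (hx : ∀ i, 0 < x i) :
    pb (Jfun p) (Ffun a m) x = 0 := by
  rw [pb_eq_DSN (Jfun p) (Ffun a m) x (fun t => Jfun p x * eJn p t)
      (fun t => Ifun m x * (maskN (liftF (fun i => a i * x i)) m t + cN (liftF (fun i => a i * x i)) (2*m) * eIn m t))
      (fun i => grad_J p x hx i) (gradF_lift a m hm x hx)]
  rw [DSN_smul_left, DSN_smul_right, DSN_J_F _ (hu0_of_a0 a x ha0) hpm]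
  ring

lemma pb_F_F (a : Fin (2*N) → ℝ) (m m' : ℕ) (h : m ≤ m') (h2 : m' ≤ N)
    (x : Fin (2*N) → ℝ) (hx : ∀ i, 0 < x i) :
    pb (Ffun a m) (Ffun a m') x = 0 := by
  rw [pb_eq_DSN (Ffun a m) (Ffun a m') x
      (fun t => Ifun m x * (maskN (liftF (fun i => a i * x i)) m t + cN (liftF (fun i => a i * x i)) (2*m) * eIn m t))
      (fun t => Ifun m' x * (maskN (liftF (fun i => a i * x i)) m' t + cN (liftF (fun i => a i * x i)) (2*m') * eIn m' t))
      (gradF_lift a m (by omega) x hx) (gradF_lift a m' (by omega) x hx)]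
  rw [DSN_smul_left, DSN_smul_right, DSN_F_F _ h h2]
  ring

lemma pb_J_H (a k : Fin (2*N) → ℝ) (p : ℕ) (hp : p ≤ N)
    (ha0 : ∀ i : Fin (2*N), i.val < 2*p → a i = 0)
    (x : Fin (2*N) → ℝ) (hx : ∀ i, 0 < x i) :
    pb (Jfun p) (Hfun a k) x
      = Jfun p x * ∑ t ∈ Finset.range p, (liftF k (2*t) + liftF k (2*t+1)) := by
  rw [pb_eq_DSN (Jfun p) (Hfun a k) x (fun t => Jfun p x * eJn p t)
      (fun t => liftF (fun i => a i * x i) t + liftF k t)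
      (fun i => grad_J p x hx i) (gradH_lift a k x hx)]
  rw [DSN_smul_left, DSN_J_H _ _ (hu0_of_a0 a x ha0) hp]

lemma pb_F_H (a k : Fin (2*N) → ℝ) (m : ℕ) (hm : m ≤ N)
    (x : Fin (2*N) → ℝ) (hx : ∀ i, 0 < x i) :
    pb (Ffun a m) (Hfun a k) x
      = Ifun m x * ∑ j ∈ Finset.range (2*m),
          liftF x j * (liftF a j
            * (cN (liftF k) (2*m) - cN (liftF k) (j+1) - cN (liftF k) j)) := by
  rw [pb_eq_DSN (Ffun a m) (Hfun a k) x
      (fun t => Ifun m x * (maskN (liftF (fun i => a i * x i)) m t + cN (liftF (fun i => a i * x i)) (2*m) * eIn m t))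
      (fun t => liftF (fun i => a i * x i) t + liftF k t)
      (gradF_lift a m (by omega) x hx) (gradH_lift a k x hx)]
  rw [DSN_smul_left, DSN_F_H _ _ hm, T_swap]
  congr 1
  apply Finset.sum_congr rfl
  intro j _
  rw [liftF_mul]
  ring

end ComputedBrackets

/-- Theorem 4.2 (main theorem) of the paper: for even `n = 2N`, `a ≠ 0`, `ℓ` the smallest index
with `a_{ℓ+1} ≠ 0` and `λ = ⌊ℓ/2⌋`, the `N` functions `J_1,…,J_λ, F_{λ+1},…,F_{N−1}, H` are
pairwise in involution iff `k_{2i} = −k_{2i−1}` for `i = 1,…,λ` and `S_{jm} = 0` for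
`m = λ+1,…,N−1`, `j = ℓ+1,…,2m`. -/
theorem stmt_10 (N : ℕ) (a k : Fin (2*N) → ℝ) (ha : a ≠ 0)
    (ℓ : ℕ) (hℓ : ℓ < 2*N) (hℓ1 : a ⟨ℓ, hℓ⟩ ≠ 0)
    (hℓ0 : ∀ j : Fin (2*N), j.val < ℓ → a j = 0)
    (G : Fin N → (Fin (2*N) → ℝ) → ℝ)
    (hG : ∀ p : Fin N, G p =
      if p.val < ℓ/2 then Jfun (p.val+1)
      else if p.val < N - 1 then Ffun a (p.val+1)
      else Hfun a k) :
    (∀ p q : Fin N, ∀ x : Fin (2*N) → ℝ, (∀ i, 0 < x i) → pb (G p) (G q) x = 0) ↔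
    ((∀ i : ℕ, (hi : i < ℓ/2) → k ⟨2*i+1, by omega⟩ = -k ⟨2*i, by omega⟩) ∧
     (∀ m : ℕ, ℓ/2 + 1 ≤ m → m + 1 ≤ N →
       ∀ j : Fin (2*N), ℓ ≤ j.val → j.val < 2*m → Sfun a k j m = 0)) := by
  have hN1 : 1 ≤ N := by omega
  have hGH : G ⟨N-1, by omega⟩ = Hfun a k := by
    rw [hG]
    have hv : (⟨N-1, by omega⟩ : Fin N).val = N-1 := rfl
    rw [hv, if_neg (by omega), if_neg (by omega)]
  constructor
  · intro hinv
    have key : ∀ p : ℕ, p ≤ ℓ/2 →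
        ∑ t ∈ Finset.range p, (liftF k (2*t) + liftF k (2*t+1)) = 0 := by
      intro p hp
      rcases Nat.eq_zero_or_pos p with rfl | hp0
      · simp
      · have hpN : p - 1 < N := by omega
        have hGp : G ⟨p-1, hpN⟩ = Jfun p := by
          rw [hG]
          have hv : (⟨p-1, hpN⟩ : Fin N).val = p-1 := rfl
          rw [hv, if_pos (by omega : p-1 < ℓ/2), show p-1+1 = p from by omega]
        have h0 := hinv ⟨p-1, hpN⟩ ⟨N-1, by omega⟩ (fun _ => 1) (fun _ => one_pos)
        rw [hGp, hGH] at h0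
        rw [pb_J_H a k p (by omega) (fun i hi => hℓ0 i (by omega)) _ (fun _ => one_pos)] at h0
        rcases mul_eq_zero.mp h0 with h | h
        · exact absurd h (ne_of_gt (Jfun_pos p (fun _ => 1) (fun _ => one_pos)))
        · exact h
    constructor
    · intro i hi
      have h1 := key (i+1) (by omega)
      have h2 := key i (by omega)
      rw [Finset.sum_range_succ, h2, zero_add] at h1
      have e1 : liftF k (2*i) = k ⟨2*i, by omega⟩ := by rw [liftF, dif_pos]
      have e2 : liftF k (2*i+1) = k ⟨2*i+1, by omega⟩ := by rw [liftF, dif_pos]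
      rw [e1, e2] at h1
      exact eq_neg_of_add_eq_zero_right h1
    · intro m hm1 hm2 j hjl hjm
      have hpN : m - 1 < N := by omega
      have hGp : G ⟨m-1, hpN⟩ = Ffun a m := by
        rw [hG]
        have hv : (⟨m-1, hpN⟩ : Fin N).val = m-1 := rfl
        rw [hv, if_neg (by omega), if_pos (by omega), show m-1+1 = m from by omega]
      have hEx : ∀ x : Fin (2*N) → ℝ, (∀ i, 0 < x i) →
          ∑ j' ∈ Finset.range (2*m), liftF x j' * (liftF a j'
            * (cN (liftF k) (2*m) - cN (liftF k) (j'+1) - cN (liftF k) j')) = 0 := by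
        intro x hx
        have h0 := hinv ⟨m-1, hpN⟩ ⟨N-1, by omega⟩ x hx
        rw [hGp, hGH, pb_F_H a k m (by omega) x hx] at h0
        rcases mul_eq_zero.mp h0 with h | h
        · exact absurd h (ne_of_gt (Ifun_pos m x hx))
        · exact h
      have h1 := hEx (fun _ => 1) (fun _ => one_pos)
      have hone : ∀ j' ∈ Finset.range (2*m), liftF (fun _ : Fin (2*N) => (1:ℝ)) j'
          * (liftF a j' * (cN (liftF k) (2*m) - cN (liftF k) (j'+1) - cN (liftF k) j'))
          = liftF a j' * (cN (liftF k) (2*m) - cN (liftF k) (j'+1) - cN (liftF k) j') := by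
        intro j' hj'
        rw [Finset.mem_range] at hj'
        rw [liftF, dif_pos (show j' < 2*N by omega), one_mul]
      rw [Finset.sum_congr rfl hone] at h1
      have h2 := hEx (fun i => if i.val = j.val then 2 else 1)
        (by intro i; split_ifs <;> norm_num)
      have htwo : ∀ j' ∈ Finset.range (2*m),
          liftF (fun i : Fin (2*N) => if i.val = j.val then (2:ℝ) else 1) j'
            * (liftF a j' * (cN (liftF k) (2*m) - cN (liftF k) (j'+1) - cN (liftF k) j'))
          = liftF a j' * (cN (liftF k) (2*m) - cN (liftF k) (j'+1) - cN (liftF k) j')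
            + (if j' = j.val then liftF a j'
                * (cN (liftF k) (2*m) - cN (liftF k) (j'+1) - cN (liftF k) j') else 0) := by
        intro j' hj'
        rw [Finset.mem_range] at hj'
        rw [liftF, dif_pos (show j' < 2*N by omega)]
        dsimp only
        by_cases h : j' = j.val
        · rw [if_pos h, if_pos h]; ring
        · rw [if_neg h, if_neg h]; ring
      rw [Finset.sum_congr rfl htwo, Finset.sum_add_distrib, h1, zero_add,
        Finset.sum_ite_eq' (Finset.range (2*m)) j.val
          (fun j' => liftF a j' * (cN (liftF k) (2*m) - cN (liftF k) (j'+1) - cN (liftF k) j')),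
        if_pos (Finset.mem_range.mpr hjm)] at h2
      rw [Sfun_eq a k j hjm (by omega)]
      exact h2
  · rintro ⟨hk, hS⟩
    have haux : ∀ p q : Fin N, p.val ≤ q.val → ∀ x : Fin (2*N) → ℝ,
        (∀ i, 0 < x i) → pb (G p) (G q) x = 0 := by
      intro p q hpq x hx
      rw [hG p, hG q]
      by_cases h1 : p.val < ℓ/2
      · by_cases h3 : q.val < ℓ/2
        · rw [if_pos h1, if_pos h3]
          exact pb_J_J (p.val+1) (q.val+1) (by omega) x hx
        · by_cases h4 : q.val < N-1
          · rw [if_pos h1, if_neg h3, if_pos h4]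
            exact pb_J_F a (p.val+1) (q.val+1) (by omega) (by omega)
              (fun i hi => hℓ0 i (by omega)) x hx
          · rw [if_pos h1, if_neg h3, if_neg h4]
            rw [pb_J_H a k (p.val+1) (by omega) (fun i hi => hℓ0 i (by omega)) x hx]
            have hz : ∑ t ∈ Finset.range (p.val+1), (liftF k (2*t) + liftF k (2*t+1)) = 0 := by
              apply Finset.sum_eq_zero
              intro t ht
              rw [Finset.mem_range] at ht
              have hti : t < ℓ/2 := by omega
              have e1 : liftF k (2*t) = k ⟨2*t, by omega⟩ := by rw [liftF, dif_pos]
              have e2 : liftF k (2*t+1) = k ⟨2*t+1, by omega⟩ := by rw [liftF, dif_pos]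
              rw [e1, e2, hk t hti]
              ring
            rw [hz, mul_zero]
      · by_cases h5 : p.val < N-1
        · by_cases h6 : q.val < N-1
          · rw [if_neg h1, if_pos h5, if_neg (show ¬ q.val < ℓ/2 by omega), if_pos h6]
            exact pb_F_F a (p.val+1) (q.val+1) (by omega) (by omega) x hx
          · rw [if_neg h1, if_pos h5, if_neg (show ¬ q.val < ℓ/2 by omega), if_neg h6]
            rw [pb_F_H a k (p.val+1) (by omega) x hx]
            have hz : ∑ j' ∈ Finset.range (2*(p.val+1)), liftF x j' * (liftF a j'
                * (cN (liftF k) (2*(p.val+1)) - cN (liftF k) (j'+1) - cN (liftF k) j')) = 0 := by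
              apply Finset.sum_eq_zero
              intro j' hj'
              rw [Finset.mem_range] at hj'
              by_cases hja : j' < ℓ
              · have hz0 : liftF a j' = 0 := by
                  rw [liftF, dif_pos (show j' < 2*N by omega)]
                  exact hℓ0 ⟨j', show j' < 2*N by omega⟩ hja
                rw [hz0]
                ring
              · have hj2N : j' < 2*N := by omega
                have hle : ℓ ≤ j' := by omega
                have hlt : j' < 2*(p.val+1) := by omega
                have hs := hS (p.val+1) (by omega) (by omega) ⟨j', hj2N⟩ hle hlt
                rw [Sfun_eq a k ⟨j', hj2N⟩ hlt (by omega)] at hs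
                have hv : ((⟨j', hj2N⟩ : Fin (2*N))).val = j' := rfl
                rw [hv] at hs
                rw [hs, mul_zero]
            rw [hz, mul_zero]
        · rw [if_neg h1, if_neg h5, if_neg (show ¬ q.val < ℓ/2 by omega),
            if_neg (show ¬ q.val < N-1 by omega)]
          exact pb_self (Hfun a k) x
    intro p q x hx
    rcases le_total p.val q.val with h | h
    · exact haux p q h x hx
    · rw [pb_antisymm, haux q p h x hx]
      ring
end

section
/- Let n = 4, a = (1,1,1,1), and k = (0,0,k_3,k_4) with k_3, k_4 ∈ ℝ. Then the function G(x) = (x_1 + x_2) x_4 / x_3 is a first integral of the Lotka–Volterra system: {G, H}(x) = 0 for all x ∈ (0,∞)^4, where H(x) = Σ_{i=1}^4 x_i + k_3 log x_3 + k_4 log x_4; equivalently, G is constant along every solution of the system in (0,∞)^4. -/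
/-- The antisymmetric matrix with `P i j = 1` for `i < j`, `-1` for `i > j`, `0` on the diagonal. -/
def Pmat (n : ℕ) : Matrix (Fin n) (Fin n) ℝ :=
  fun i j => if i < j then 1 else if j < i then -1 else 0

section aux

variable (k₃ k₄ : ℝ) (x : Fin 4 → ℝ)

lemma proj_hasFDerivAt (i : Fin 4) : HasFDerivAt (fun y : Fin 4 → ℝ => y i)
    (ContinuousLinearMap.proj i : (Fin 4 → ℝ) →L[ℝ] ℝ) x :=
  hasFDerivAt_apply i x

lemma G_hasFDerivAt (hx2 : x 2 ≠ 0) :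
    HasFDerivAt (fun y : Fin 4 → ℝ => (y 0 + y 1) * y 3 / y 2)
      ((((x 0 + x 1) * x 3) • (-(x 2 ^ 2)⁻¹ • (ContinuousLinearMap.proj 2 : (Fin 4 → ℝ) →L[ℝ] ℝ))) +
        (x 2)⁻¹ • ((x 0 + x 1) • (ContinuousLinearMap.proj 3 : (Fin 4 → ℝ) →L[ℝ] ℝ) +
          x 3 • ((ContinuousLinearMap.proj 0 : (Fin 4 → ℝ) →L[ℝ] ℝ) + ContinuousLinearMap.proj 1))) x := by
  have hinv := (hasDerivAt_inv hx2).comp_hasFDerivAt x (proj_hasFDerivAt x 2)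
  have hGd := ((((proj_hasFDerivAt x 0).add (proj_hasFDerivAt x 1)).mul (proj_hasFDerivAt x 3)).mul hinv)
  simp only [div_eq_mul_inv]
  exact hGd

lemma H_hasFDerivAt (hx2 : x 2 ≠ 0) (hx3 : x 3 ≠ 0) :
    HasFDerivAt (fun y : Fin 4 → ℝ => (∑ i, y i) + k₃ * Real.log (y 2) + k₄ * Real.log (y 3))
      ((∑ i, (ContinuousLinearMap.proj i : (Fin 4 → ℝ) →L[ℝ] ℝ)) +
        k₃ • (x 2)⁻¹ • (ContinuousLinearMap.proj 2 : (Fin 4 → ℝ) →L[ℝ] ℝ) +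
        k₄ • (x 3)⁻¹ • (ContinuousLinearMap.proj 3 : (Fin 4 → ℝ) →L[ℝ] ℝ)) x := by
  have hsum : HasFDerivAt (fun y : Fin 4 → ℝ => ∑ i, y i)
      (∑ i, (ContinuousLinearMap.proj i : (Fin 4 → ℝ) →L[ℝ] ℝ)) x :=
    HasFDerivAt.fun_sum (fun i _ => proj_hasFDerivAt x i)
  have hl2 := ((Real.hasDerivAt_log hx2).comp_hasFDerivAt x (proj_hasFDerivAt x 2)).const_mul k₃
  have hl3 := ((Real.hasDerivAt_log hx3).comp_hasFDerivAt x (proj_hasFDerivAt x 3)).const_mul k₄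
  exact (hsum.add hl2).add hl3

end aux


/-- For `n = 4`, `a = (1,1,1,1)` and `k = (0,0,k₃,k₄)`: the function
`G(x) = (x_1 + x_2) x_4 / x_3` is a first integral: `{G, H} = 0` on the positive orthant
(with `H(x) = Σ_i x_i + k₃ log x_3 + k₄ log x_4`), and `G` is constant along every solution
of the Lotka–Volterra system with values in the positive orthant. -/
theorem stmt_18 (k₃ k₄ : ℝ) (k : Fin 4 → ℝ) (hk : k = ![0, 0, k₃, k₄])
    (G : (Fin 4 → ℝ) → ℝ) (hG : G = fun y => (y 0 + y 1) * y 3 / y 2)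
    (H : (Fin 4 → ℝ) → ℝ)
    (hH : H = fun y => (∑ i, y i) + k₃ * Real.log (y 2) + k₄ * Real.log (y 3)) :
    (∀ x : Fin 4 → ℝ, (∀ i, 0 < x i) → pb G H x = 0) ∧
    (∀ (I : Set ℝ), Convex ℝ I → ∀ x : ℝ → Fin 4 → ℝ,
      (∀ t ∈ I, ∀ i, 0 < x t i) →
      (∀ t ∈ I, ∀ i : Fin 4, HasDerivAt (fun s => x s i)
        (x t i * ∑ j, Pmat 4 i j * (x t j + k j)) t) →
      ∀ s ∈ I, ∀ t ∈ I, G (x s) = G (x t)) := by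
  subst hk hG hH
  constructor
  · intro x hx
    have hx2 := (hx 2).ne'
    have hx3 := (hx 3).ne'
    have hGd := (G_hasFDerivAt x hx2).fderiv
    have hHd := (H_hasFDerivAt k₃ k₄ x hx2 hx3).fderiv
    set Gf : (Fin 4 → ℝ) → ℝ := fun y => (y 0 + y 1) * y 3 / y 2 with hGf
    set Hf : (Fin 4 → ℝ) → ℝ := fun y => (∑ i, y i) + k₃ * Real.log (y 2) + k₄ * Real.log (y 3) with hHf
    have pG0 : pd Gf x 0 = (x 2)⁻¹ * x 3 := by rw [pd, hGd]; simp [Pi.single_apply]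
    have pG1 : pd Gf x 1 = (x 2)⁻¹ * x 3 := by rw [pd, hGd]; simp [Pi.single_apply]
    have pG2 : pd Gf x 2 = -((x 0 + x 1) * x 3 * (x 2 ^ 2)⁻¹) := by
      rw [pd, hGd]; simp [Pi.single_apply]
    have pG3 : pd Gf x 3 = (x 2)⁻¹ * (x 0 + x 1) := by rw [pd, hGd]; simp [Pi.single_apply]
    have pH0 : pd Hf x 0 = 1 := by rw [pd, hHd]; simp [Pi.single_apply, Fin.sum_univ_four]
    have pH1 : pd Hf x 1 = 1 := by rw [pd, hHd]; simp [Pi.single_apply, Fin.sum_univ_four]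
    have pH2 : pd Hf x 2 = 1 + k₃ * (x 2)⁻¹ := by
      rw [pd, hHd]; simp [Pi.single_apply, Fin.sum_univ_four]
    have pH3 : pd Hf x 3 = 1 + k₄ * (x 3)⁻¹ := by
      rw [pd, hHd]; simp [Pi.single_apply, Fin.sum_univ_four]
    rw [pb, Fin.sum_univ_four]
    simp only [Fin.sum_univ_four, pG0, pG1, pG2, pG3, pH0, pH1, pH2, pH3,
      show ((0:Fin 4) < 0) = False from by simp, show ((0:Fin 4) < 1) = True from by decide,
      show ((0:Fin 4) < 2) = True from by decide, show ((0:Fin 4) < 3) = True from by decide,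
      show ((1:Fin 4) < 0) = False from by decide, show ((1:Fin 4) < 1) = False from by simp,
      show ((1:Fin 4) < 2) = True from by decide, show ((1:Fin 4) < 3) = True from by decide,
      show ((2:Fin 4) < 0) = False from by decide, show ((2:Fin 4) < 1) = False from by decide,
      show ((2:Fin 4) < 2) = False from by simp, show ((2:Fin 4) < 3) = True from by decide,
      show ((3:Fin 4) < 0) = False from by decide, show ((3:Fin 4) < 1) = False from by decide,
      show ((3:Fin 4) < 2) = False from by decide, show ((3:Fin 4) < 3) = False from by simp,
      if_true, if_false]
    field_simp
    ring
  · intro I hI x hpos hder s hs t ht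
    set g : ℝ → ℝ := fun s => (x s 0 + x s 1) * x s 3 / x s 2 with hg
    have hd : ∀ u ∈ I, HasDerivAt g 0 u := by
      intro u hu
      have hx2 := (hpos u hu 2).ne'
      have hpath : HasDerivAt x
          (fun i => x u i * ∑ j, Pmat 4 i j * (x u j + ![0, 0, k₃, k₄] j)) u :=
        hasDerivAt_pi.mpr (hder u hu)
      have hcomp := (G_hasFDerivAt (x u) hx2).comp_hasDerivAt u hpath
      refine hcomp.congr_deriv ?_
      simp only [ContinuousLinearMap.add_apply, ContinuousLinearMap.smul_apply,
        ContinuousLinearMap.neg_apply, ContinuousLinearMap.proj_apply, Fin.sum_univ_four,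
        show Pmat 4 0 0 = 0 from rfl, show Pmat 4 0 1 = 1 from rfl,
        show Pmat 4 0 2 = 1 from rfl, show Pmat 4 0 3 = 1 from rfl,
        show Pmat 4 1 0 = -1 from rfl, show Pmat 4 1 1 = 0 from rfl,
        show Pmat 4 1 2 = 1 from rfl, show Pmat 4 1 3 = 1 from rfl,
        show Pmat 4 2 0 = -1 from rfl, show Pmat 4 2 1 = -1 from rfl,
        show Pmat 4 2 2 = 0 from rfl, show Pmat 4 2 3 = 1 from rfl,
        show Pmat 4 3 0 = -1 from rfl, show Pmat 4 3 1 = -1 from rfl,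
        show Pmat 4 3 2 = -1 from rfl, show Pmat 4 3 3 = 0 from rfl,
        Matrix.cons_val_zero, Matrix.cons_val_one, Matrix.head_cons,
        Matrix.cons_val_two, Matrix.cons_val_three, Matrix.tail_cons]
      field_simp
      linear_combination (2 * x u 0 * x u 1 * x u 3 - x u 0 * x u 3 * k₄ - x u 0 * x u 3 ^ 2 + x u 0 ^ 2 * x u 3 - x u 1 * x u 3 * k₄ - x u 1 * x u 3 ^ 2 + x u 1 ^ 2 * x u 3) * (x u 2)⁻¹ * mul_inv_cancel₀ hx2
    have key := hI.norm_image_sub_le_of_norm_hasFDerivWithin_le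
      (C := 0) (f' := fun _ => ContinuousLinearMap.smulRight (1 : ℝ →L[ℝ] ℝ) (0:ℝ))
      (fun w hw => ((hd w hw).hasFDerivAt).hasFDerivWithinAt)
      (fun w hw => by simp) ht hs
    rw [zero_mul] at key
    have h0 := sub_eq_zero.mp (norm_le_zero_iff.mp key)
    exact h0
end

section
/- Let n = 5 and a, k ∈ ℝ^5, and define F(x) = (x_5/x_4)(a_1 x_1 + a_2 x_2 + a_3 x_3) and H(x) = Σ_{i=1}^5 (a_i x_i + k_i log x_i) on (0,∞)^5. Then the log-canonical Poisson bracket satisfies {F, H}(x) = (x_5/x_4)(a_1(k_2+k_3) x_1 + a_2(k_3−k_1) x_2 − a_3(k_1+k_2) x_3) for all x ∈ (0,∞)^5; consequently, {F, H}(x) = 0 for all x ∈ (0,∞)^5 if and only if a_1(k_2+k_3) = a_2(k_3−k_1) = a_3(k_1+k_2) = 0. -/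
lemma hasFDerivAt_H' (a k : Fin 5 → ℝ) (x : Fin 5 → ℝ) (hx : ∀ i, 0 < x i) :
    HasFDerivAt (Hfun a k)
      (∑ i : Fin 5, (a i + k i / x i) • (ContinuousLinearMap.proj i : (Fin 5 → ℝ) →L[ℝ] ℝ)) x := by
  have he : Hfun a k = fun y : Fin 5 → ℝ => ∑ i : Fin 5, (a i * y i + k i * Real.log (y i)) := rfl
  rw [he]
  apply HasFDerivAt.fun_sum
  intro i _
  have hproj : HasFDerivAt (fun y : Fin 5 → ℝ => y i)
      (ContinuousLinearMap.proj i : (Fin 5 → ℝ) →L[ℝ] ℝ) x :=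
    (ContinuousLinearMap.proj i : (Fin 5 → ℝ) →L[ℝ] ℝ).hasFDerivAt
  have hg : HasDerivAt (fun t : ℝ => a i * t + k i * Real.log t) (a i + k i / x i) (x i) := by
    have h1 : HasDerivAt (fun t : ℝ => a i * t) (a i) (x i) := by
      simpa using (hasDerivAt_id (x i)).const_mul (a i)
    have h2 : HasDerivAt (fun t : ℝ => k i * Real.log t) (k i * (x i)⁻¹) (x i) :=
      (Real.hasDerivAt_log (hx i).ne').const_mul (k i)
    simpa [div_eq_mul_inv] using h1.fun_add h2
  exact hg.comp_hasFDerivAt x hproj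

lemma pd_H' (a k : Fin 5 → ℝ) (x : Fin 5 → ℝ) (hx : ∀ i, 0 < x i) (j : Fin 5) :
    pd (Hfun a k) x j = a j + k j / x j := by
  rw [pd, (hasFDerivAt_H' a k x hx).fderiv]
  simp [ContinuousLinearMap.sum_apply, Pi.single_apply, mul_ite, Finset.sum_ite_eq']

lemma hasFDerivAt_F' (a : Fin 5 → ℝ) (x : Fin 5 → ℝ) (hx : ∀ i, 0 < x i) :
    HasFDerivAt (fun y : Fin 5 → ℝ => y 4 / y 3 * (a 0 * y 0 + a 1 * y 1 + a 2 * y 2))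
      ((x 4 / x 3 * a 0) • (ContinuousLinearMap.proj 0 : (Fin 5 → ℝ) →L[ℝ] ℝ)
       + (x 4 / x 3 * a 1) • (ContinuousLinearMap.proj 1 : (Fin 5 → ℝ) →L[ℝ] ℝ)
       + (x 4 / x 3 * a 2) • (ContinuousLinearMap.proj 2 : (Fin 5 → ℝ) →L[ℝ] ℝ)
       + (-(x 4 * (a 0 * x 0 + a 1 * x 1 + a 2 * x 2)) / x 3 ^ 2) •
           (ContinuousLinearMap.proj 3 : (Fin 5 → ℝ) →L[ℝ] ℝ)
       + ((a 0 * x 0 + a 1 * x 1 + a 2 * x 2) / x 3) •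
           (ContinuousLinearMap.proj 4 : (Fin 5 → ℝ) →L[ℝ] ℝ)) x := by
  have p : ∀ i : Fin 5, HasFDerivAt (fun y : Fin 5 → ℝ => y i)
      (ContinuousLinearMap.proj i : (Fin 5 → ℝ) →L[ℝ] ℝ) x :=
    fun i => (ContinuousLinearMap.proj i : (Fin 5 → ℝ) →L[ℝ] ℝ).hasFDerivAt
  have hinv : HasFDerivAt (fun y : Fin 5 → ℝ => (y 3)⁻¹)
      ((-(x 3 ^ 2)⁻¹) • (ContinuousLinearMap.proj 3 : (Fin 5 → ℝ) →L[ℝ] ℝ)) x :=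
    (hasDerivAt_inv (hx 3).ne').comp_hasFDerivAt x (p 3)
  have hdiv : HasFDerivAt (fun y : Fin 5 → ℝ => y 4 * (y 3)⁻¹)
      ((x 4) • ((-(x 3 ^ 2)⁻¹) • (ContinuousLinearMap.proj 3 : (Fin 5 → ℝ) →L[ℝ] ℝ))
        + (x 3)⁻¹ • (ContinuousLinearMap.proj 4 : (Fin 5 → ℝ) →L[ℝ] ℝ)) x :=
    (p 4).mul hinv
  have hL : HasFDerivAt (fun y : Fin 5 → ℝ => a 0 * y 0 + a 1 * y 1 + a 2 * y 2)
      (a 0 • (ContinuousLinearMap.proj 0 : (Fin 5 → ℝ) →L[ℝ] ℝ)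
       + a 1 • (ContinuousLinearMap.proj 1 : (Fin 5 → ℝ) →L[ℝ] ℝ)
       + a 2 • (ContinuousLinearMap.proj 2 : (Fin 5 → ℝ) →L[ℝ] ℝ)) x :=
    (((p 0).const_mul (a 0)).add ((p 1).const_mul (a 1))).add ((p 2).const_mul (a 2))
  have h := hdiv.fun_mul hL
  simp only [div_eq_mul_inv]
  refine h.congr_fderiv ?_
  ext v
  simp only [ContinuousLinearMap.add_apply, ContinuousLinearMap.smul_apply,
    ContinuousLinearMap.sub_apply, ContinuousLinearMap.proj_apply, smul_eq_mul,
    ContinuousLinearMap.coe_smul', Pi.smul_apply, ContinuousLinearMap.coe_sub',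
    Pi.sub_apply]
  field_simp
  ring

lemma pb_expand (f g : (Fin 5 → ℝ) → ℝ) (x : Fin 5 → ℝ) :
    pb f g x =
      x 0 * x 1 * (pd f x 0 * pd g x 1 - pd f x 1 * pd g x 0)
      + x 0 * x 2 * (pd f x 0 * pd g x 2 - pd f x 2 * pd g x 0)
      + x 0 * x 3 * (pd f x 0 * pd g x 3 - pd f x 3 * pd g x 0)
      + x 0 * x 4 * (pd f x 0 * pd g x 4 - pd f x 4 * pd g x 0)
      + x 1 * x 2 * (pd f x 1 * pd g x 2 - pd f x 2 * pd g x 1)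
      + x 1 * x 3 * (pd f x 1 * pd g x 3 - pd f x 3 * pd g x 1)
      + x 1 * x 4 * (pd f x 1 * pd g x 4 - pd f x 4 * pd g x 1)
      + x 2 * x 3 * (pd f x 2 * pd g x 3 - pd f x 3 * pd g x 2)
      + x 2 * x 4 * (pd f x 2 * pd g x 4 - pd f x 4 * pd g x 2)
      + x 3 * x 4 * (pd f x 3 * pd g x 4 - pd f x 4 * pd g x 3) := by
  rw [pb]
  simp (config := { decide := true }) only [Fin.sum_univ_five, if_true, if_false]
  ring

set_option maxHeartbeats 1000000 in
lemma pb_key (a k : Fin 5 → ℝ) (x : Fin 5 → ℝ) (hx : ∀ i, 0 < x i) :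
    pb (fun y : Fin 5 → ℝ => y 4 / y 3 * (a 0 * y 0 + a 1 * y 1 + a 2 * y 2)) (Hfun a k) x
      = x 4 / x 3 *
        (a 0 * (k 1 + k 2) * x 0 + a 1 * (k 2 - k 0) * x 1 - a 2 * (k 0 + k 1) * x 2) := by
  have hpF : ∀ j : Fin 5,
      pd (fun y : Fin 5 → ℝ => y 4 / y 3 * (a 0 * y 0 + a 1 * y 1 + a 2 * y 2)) x j
        = ((x 4 / x 3 * a 0) • (ContinuousLinearMap.proj 0 : (Fin 5 → ℝ) →L[ℝ] ℝ)
       + (x 4 / x 3 * a 1) • (ContinuousLinearMap.proj 1 : (Fin 5 → ℝ) →L[ℝ] ℝ)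
       + (x 4 / x 3 * a 2) • (ContinuousLinearMap.proj 2 : (Fin 5 → ℝ) →L[ℝ] ℝ)
       + (-(x 4 * (a 0 * x 0 + a 1 * x 1 + a 2 * x 2)) / x 3 ^ 2) •
           (ContinuousLinearMap.proj 3 : (Fin 5 → ℝ) →L[ℝ] ℝ)
       + ((a 0 * x 0 + a 1 * x 1 + a 2 * x 2) / x 3) •
           (ContinuousLinearMap.proj 4 : (Fin 5 → ℝ) →L[ℝ] ℝ)) (Pi.single j 1) := by
    intro j
    rw [pd, (hasFDerivAt_F' a x hx).fderiv]
  have pF0 : pd (fun y : Fin 5 → ℝ => y 4 / y 3 * (a 0 * y 0 + a 1 * y 1 + a 2 * y 2)) x 0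
      = x 4 / x 3 * a 0 := by
    rw [hpF 0]; simp (config := { decide := true }) [Pi.single_apply]
  have pF1 : pd (fun y : Fin 5 → ℝ => y 4 / y 3 * (a 0 * y 0 + a 1 * y 1 + a 2 * y 2)) x 1
      = x 4 / x 3 * a 1 := by
    rw [hpF 1]; simp (config := { decide := true }) [Pi.single_apply]
  have pF2 : pd (fun y : Fin 5 → ℝ => y 4 / y 3 * (a 0 * y 0 + a 1 * y 1 + a 2 * y 2)) x 2
      = x 4 / x 3 * a 2 := by
    rw [hpF 2]; simp (config := { decide := true }) [Pi.single_apply]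
  have pF3 : pd (fun y : Fin 5 → ℝ => y 4 / y 3 * (a 0 * y 0 + a 1 * y 1 + a 2 * y 2)) x 3
      = -(x 4 * (a 0 * x 0 + a 1 * x 1 + a 2 * x 2)) / x 3 ^ 2 := by
    rw [hpF 3]; simp (config := { decide := true }) [Pi.single_apply]
  have pF4 : pd (fun y : Fin 5 → ℝ => y 4 / y 3 * (a 0 * y 0 + a 1 * y 1 + a 2 * y 2)) x 4
      = (a 0 * x 0 + a 1 * x 1 + a 2 * x 2) / x 3 := by
    rw [hpF 4]; simp (config := { decide := true }) [Pi.single_apply]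
  rw [pb_expand, pF0, pF1, pF2, pF3, pF4,
    pd_H' a k x hx 0, pd_H' a k x hx 1, pd_H' a k x hx 2, pd_H' a k x hx 3, pd_H' a k x hx 4]
  have h0 := (hx 0).ne'
  have h1 := (hx 1).ne'
  have h2 := (hx 2).ne'
  have h3 := (hx 3).ne'
  have h4 := (hx 4).ne'
  field_simp
  ring

/-- The `n = 5` example from the appendix: with `F(x) = (x_5/x_4)(a_1 x_1 + a_2 x_2 + a_3 x_3)`
and `H(x) = Σ_i (a_i x_i + k_i log x_i)`, one has
`{F, H} = (x_5/x_4)(a_1(k_2+k_3)x_1 + a_2(k_3−k_1)x_2 − a_3(k_1+k_2)x_3)` on the positive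
orthant; consequently `F` is a first integral iff
`a_1(k_2+k_3) = a_2(k_3−k_1) = a_3(k_1+k_2) = 0`. (Indices here are 0-based.) -/
theorem stmt_19 (a k : Fin 5 → ℝ)
    (F : (Fin 5 → ℝ) → ℝ)
    (hF : F = fun y => y 4 / y 3 * (a 0 * y 0 + a 1 * y 1 + a 2 * y 2)) :
    (∀ x : Fin 5 → ℝ, (∀ i, 0 < x i) →
      pb F (Hfun a k) x = x 4 / x 3 *
        (a 0 * (k 1 + k 2) * x 0 + a 1 * (k 2 - k 0) * x 1 - a 2 * (k 0 + k 1) * x 2)) ∧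
    ((∀ x : Fin 5 → ℝ, (∀ i, 0 < x i) → pb F (Hfun a k) x = 0) ↔
      (a 0 * (k 1 + k 2) = 0 ∧ a 1 * (k 2 - k 0) = 0 ∧ a 2 * (k 0 + k 1) = 0)) := by
  subst hF
  have pos2 : ∀ i : Fin 5, 0 < (if i = 0 then (2:ℝ) else 1) := by
    intro i; split <;> norm_num
  have pos3 : ∀ i : Fin 5, 0 < (if i = 1 then (2:ℝ) else 1) := by
    intro i; split <;> norm_num
  refine ⟨fun x hx => pb_key a k x hx, ?_⟩
  constructor
  · intro h
    have e1 := h (fun _ => 1) (fun _ => one_pos)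
    have e2 := h (fun i => if i = 0 then 2 else 1) pos2
    have e3 := h (fun i => if i = 1 then 2 else 1) pos3
    rw [pb_key a k _ (fun _ => one_pos)] at e1
    rw [pb_key a k _ pos2] at e2
    rw [pb_key a k _ pos3] at e3
    simp (config := { decide := true }) only [if_true, if_false] at e2 e3
    norm_num at e1 e2 e3
    refine ⟨by linarith, by linarith, by linarith⟩
  · rintro ⟨h1, h2, h3⟩ x hx
    rw [pb_key a k x hx, h1, h2, h3]
    ring
end
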